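/- Every C¹ solution p : [s₀,∞) → ℂ of i p'(s) = (c(ω)/2)(Re p(s)) p(s), with c(ω) ∈ ℝ, converges as s → ∞; moreover if c(ω) ≠ 0 then the limit is a purely imaginary number, i.e., Re(lim_{s→∞} p(s)) = 0. -/

import Mathlib

open Filter Set

/-- Every C¹ solution of i p' = (c/2)(Re p)p with c ∈ ℝ converges
as s → ∞, and if c ≠ 0 the limit is purely imaginary. -/
theorem stmt11 (c s₀ : ℝ) (p : ℝ → ℂ)
    (hp : ∀ s ≥ s₀, HasDerivAt p
      (-Complex.I * (((c : ℂ) / 2) * ((p s).re : ℂ) * p s)) s) :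
    ∃ L : ℂ, Tendsto p atTop (nhds L) ∧ (c ≠ 0 → L.re = 0) := by
  set X : ℝ → ℝ := fun s => (p s).re with hXdef
  set Y : ℝ → ℝ := fun s => (p s).im with hYdef
  have hX : ∀ s ≥ s₀, HasDerivAt X (c/2 * (X s * Y s)) s := by
    intro s hs
    have h := (Complex.reCLM.hasFDerivAt.comp s (hp s hs).hasFDerivAt).hasDerivAt
    refine h.congr_deriv ?_
    simp [Complex.mul_re, Complex.mul_im, X, Y]
    ring
  have hY : ∀ s ≥ s₀, HasDerivAt Y (-(c/2 * X s ^ 2)) s := by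
    intro s hs
    have h := (Complex.imCLM.hasFDerivAt.comp s (hp s hs).hasFDerivAt).hasDerivAt
    refine h.congr_deriv ?_
    simp [Complex.mul_re, Complex.mul_im, X, Y]
    ring
  by_cases hc : c = 0
  · -- p is constant
    refine ⟨p s₀, ?_, fun h => absurd hc h⟩
    have hconst : ∀ s ≥ s₀, p s = p s₀ := by
      intro s hs
      have := constant_of_has_deriv_right_zero
        (f := p) (a := s₀) (b := s)
        (fun x hx => ((hp x hx.1).continuousAt).continuousWithinAt)
        (fun x hx => by
          have := (hp x hx.1).hasDerivWithinAt (s := Ici x)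
          simpa [hc] using this)
      exact this s ⟨hs, le_rfl⟩
    exact tendsto_const_nhds.congr'
      (eventually_atTop.2 ⟨s₀, fun s hs => (hconst s hs).symm⟩)
  -- c ≠ 0 case
  set σ : ℝ := if 0 < c then 1 else -1 with hσdef
  have hσc : σ * c = |c| := by
    rcases lt_or_gt_of_ne hc with h | h
    · simp [hσdef, not_lt.2 h.le, abs_of_neg h]
    · simp [hσdef, h, abs_of_pos h]
  have hσsq : σ * σ = 1 := by rcases eq_or_ne σ 1 with h | h <;> simp [hσdef] at * <;> split_ifs <;> norm_num
  have hk : (0:ℝ) < |c|/2 := by positivity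
  set k : ℝ := |c|/2 with hkdef
  set W : ℝ → ℝ := fun s => σ * Y s with hWdef
  have hW : ∀ s ≥ s₀, HasDerivAt W (-(k * X s ^ 2)) s := by
    intro s hs
    have := (hY s hs).const_mul σ
    refine this.congr_deriv ?_
    simp only [hkdef]
    rw [← hσc]; ring
  -- N = X² + Y² is constant
  set N : ℝ → ℝ := fun s => X s ^ 2 + Y s ^ 2 with hNdef
  have hN : ∀ s ≥ s₀, HasDerivAt N 0 s := by
    intro s hs
    have := ((hX s hs).mul (hX s hs)).add ((hY s hs).mul (hY s hs))
    have h2 : HasDerivAt N (c/2 * (X s * Y s) * X s + X s * (c/2 * (X s * Y s)) +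
        (-(c/2 * X s ^ 2) * Y s + Y s * -(c/2 * X s ^ 2))) s := by
      simp only [hNdef, sq]
      exact this.congr_deriv (by ring)
    convert h2 using 1
    ring
  have hNconst : ∀ s ≥ s₀, N s = N s₀ := by
    intro s hs
    exact constant_of_has_deriv_right_zero
      (fun x hx => ((hN x hx.1).continuousAt).continuousWithinAt)
      (fun x hx => (hN x hx.1).hasDerivWithinAt) s ⟨hs, le_rfl⟩
  -- bounds
  have hNnonneg : 0 ≤ N s₀ := by positivity
  have hWbound : ∀ s ≥ s₀, |W s| ≤ Real.sqrt (N s₀) := by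
    intro s hs
    have h1 : W s ^ 2 ≤ N s₀ := by
      have : W s ^ 2 = Y s ^ 2 := by
        simp only [hWdef, mul_pow]
        have : σ ^ 2 = 1 := by rw [sq, hσsq]
        rw [this, one_mul]
      rw [this, ← hNconst s hs]
      simp only [hNdef]
      nlinarith [sq_nonneg (X s)]
    calc |W s| = Real.sqrt (W s ^ 2) := (Real.sqrt_sq_eq_abs _).symm
    _ ≤ Real.sqrt (N s₀) := Real.sqrt_le_sqrt h1
  -- W antitone on Ici s₀
  have hWanti : AntitoneOn W (Ici s₀) := by
    apply antitoneOn_of_deriv_nonpos (convex_Ici s₀)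
      (fun x hx => ((hW x hx).continuousAt).continuousWithinAt)
    · intro x hx
      rw [interior_Ici] at hx
      exact ((hW x hx.le).differentiableAt).differentiableWithinAt
    · intro x hx
      rw [interior_Ici] at hx
      rw [(hW x hx.le).deriv]
      nlinarith [sq_nonneg (X x), hk.le]
  -- extended antitone function
  set Wt : ℝ → ℝ := fun s => W (max s s₀) with hWtdef
  have hWtanti : Antitone Wt := fun a b hab =>
    hWanti (le_max_right a s₀) (le_max_right b s₀) (max_le_max hab le_rfl)
  have hWtbdd : BddBelow (range Wt) := by
    refine ⟨-Real.sqrt (N s₀), ?_⟩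
    rintro _ ⟨s, rfl⟩
    have := hWbound (max s s₀) (le_max_right s s₀)
    linarith [neg_abs_le (W (max s s₀))]
  have hWt : Tendsto Wt atTop (nhds (⨅ i, Wt i)) := tendsto_atTop_ciInf hWtanti hWtbdd
  set ℓ : ℝ := ⨅ i, Wt i with hℓdef
  have hWeq : W =ᶠ[atTop] Wt := by
    filter_upwards [eventually_ge_atTop s₀] with s hs
    simp [hWtdef, max_eq_left hs]
  have hWlim : Tendsto W atTop (nhds ℓ) := hWt.congr' hWeq.symm
  have hYlim : Tendsto Y atTop (nhds (σ * ℓ)) := by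
    have : Y = fun s => σ * W s := by
      funext s; simp only [hWdef]; rw [← mul_assoc, hσsq, one_mul]
    rw [this]
    exact hWlim.const_mul σ
  -- X² tends to N s₀ - (σℓ)²
  have hX2lim : Tendsto (fun s => X s ^ 2) atTop (nhds (N s₀ - (σ * ℓ) ^ 2)) := by
    have h0 : Tendsto (fun s => Y s ^ 2) atTop (nhds ((σ * ℓ) ^ 2)) := by
      have := hYlim.mul hYlim
      simpa [sq] using this
    have h1 : Tendsto (fun s => N s₀ - Y s ^ 2) atTop (nhds (N s₀ - (σ * ℓ) ^ 2)) :=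
      tendsto_const_nhds.sub h0
    refine h1.congr' ?_
    filter_upwards [eventually_ge_atTop s₀] with s hs
    have := hNconst s hs
    simp only [hNdef] at this ⊢
    linarith
  set δ : ℝ := N s₀ - (σ * ℓ) ^ 2 with hδdef
  have hδ0 : δ = 0 := by
    rcases le_or_gt δ 0 with h | h
    · have : 0 ≤ δ := ge_of_tendsto hX2lim
        (eventually_atTop.2 ⟨s₀, fun s _ => sq_nonneg (X s)⟩)
      linarith
    · exfalso
      -- eventually X² > δ/2
      obtain ⟨s₁, hs₁⟩ := (eventually_atTop.1
        ((hX2lim.eventually (eventually_gt_nhds (by linarith : δ/2 < δ))).and (eventually_ge_atTop s₀)))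
      -- g s = W s + k*(δ/2)*s is antitone on Ici s₁
      set g : ℝ → ℝ := fun s => W s + k * (δ/2) * s with hgdef
      have hganti : AntitoneOn g (Ici s₁) := by
        apply antitoneOn_of_deriv_nonpos (convex_Ici s₁)
        · intro x hx
          exact (((hW x ((hs₁ x hx).2)).continuousAt).add
            ((continuous_const.mul continuous_id).continuousAt)).continuousWithinAt
        · intro x hx
          rw [interior_Ici] at hx
          exact (((hW x ((hs₁ x hx.le).2)).add
            ((hasDerivAt_id x).const_mul (k * (δ/2)))).differentiableAt).differentiableWithinAt
        · intro x hx
          rw [interior_Ici] at hx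
          have hd : HasDerivAt g (-(k * X x ^ 2) + k * (δ/2) * 1) x :=
            (hW x ((hs₁ x hx.le).2)).add ((hasDerivAt_id x).const_mul (k * (δ/2)))
          rw [hd.deriv]
          have := (hs₁ x hx.le).1
          nlinarith
      -- derive contradiction: W s → -∞
      obtain ⟨s₂, hs₂a, hs₂b⟩ : ∃ s₂, s₁ ≤ s₂ ∧
          W s₁ + k * (δ/2) * s₁ - k * (δ/2) * s₂ < -Real.sqrt (N s₀) := by
        have hkδ : 0 < k * (δ/2) := by positivity
        refine ⟨max s₁ ((W s₁ + k * (δ/2) * s₁ + Real.sqrt (N s₀) + 1) / (k * (δ/2))),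
          le_max_left _ _, ?_⟩
        have h2 : (W s₁ + k * (δ/2) * s₁ + Real.sqrt (N s₀) + 1) / (k * (δ/2)) ≤
            max s₁ ((W s₁ + k * (δ/2) * s₁ + Real.sqrt (N s₀) + 1) / (k * (δ/2))) :=
          le_max_right _ _
        have h3 := (div_le_iff₀ hkδ).1 h2
        nlinarith
      have h4 : g s₂ ≤ g s₁ := hganti (self_mem_Ici) (mem_Ici.2 hs₂a) hs₂a
      have h5 : W s₂ ≤ W s₁ + k * (δ/2) * s₁ - k * (δ/2) * s₂ := by
        simp only [hgdef] at h4; linarith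
      have h6 := hWbound s₂ (le_trans (hs₁ s₁ le_rfl).2 hs₂a)
      have := neg_abs_le (W s₂)
      linarith
  -- X → 0
  have hXlim : Tendsto X atTop (nhds 0) := by
    have h1 : Tendsto (fun s => X s ^ 2) atTop (nhds 0) := by
      rw [← hδ0]; exact hX2lim
    have h2 : Tendsto (fun s => |X s|) atTop (nhds 0) := by
      have := (Real.continuous_sqrt.tendsto 0).comp h1
      simpa [Function.comp_def, Real.sqrt_sq_eq_abs] using this
    exact tendsto_zero_iff_abs_tendsto_zero X |>.2 h2
  -- conclude
  refine ⟨(σ * ℓ : ℝ) * Complex.I, ?_, fun _ => by simp⟩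
  have hrepr : p = fun s => (X s : ℂ) + (Y s : ℂ) * Complex.I := by
    funext s; exact (Complex.re_add_im (p s)).symm
  rw [hrepr]
  have h1 : Tendsto (fun s => (X s : ℂ)) atTop (nhds 0) := by
    have := Complex.continuous_ofReal.tendsto 0 |>.comp hXlim
    simpa [Function.comp_def] using this
  have h2 : Tendsto (fun s => (Y s : ℂ)) atTop (nhds ((σ * ℓ : ℝ) : ℂ)) :=
    (Complex.continuous_ofReal.tendsto _).comp hYlim
  simpa using h1.add (h2.mul_const Complex.I)
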